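/- arXiv:2005.05944 — 4 statements merged into one kernel-verified Lean document; each statement's English description precedes it below -/
import Mathlib

section
/- Assume: (A1, forward simulation) if s ≈ t and (s,ς) ⇀λ (s',ς') in the source then there is t' with (t,ς) ⇀λ (t',ς') in the target and s' ≈ t'; (A2, backward simulation) if s ≈ t and (t,ς) ⇀λ (t',ς') in the target then there is s' with (s,ς) ⇀λ (s',ς') in the source and s' ≈ t'; (A3, lock-step simulation of strong similarity) if strong((t₁,ς),(t₂,ς)) and (t₁,ς) →τ (t₁',ς) then there is t₂' with (t₂,ς) →τ (t₂',ς) and strong((t₁',ς),(t₂',ς)); (A4, weakening) if λ ∈ Out, strong((t₁,ς),(t₂,ς)) and (t₁,ς) →λ (t₁',ς') then there is t₂' with (t₂,ς) →λ (t₂',ς') and weak((t₁',ς'),(t₂',ς')); (A5, option simulation of weak similarity) if weak((t₁,ς),(t₂,ς)) and (t₁,ς) →τ (t₁',ς) then weak((t₁',ς),(t₂,ς)); (A6, strengthening) if λ ∈ In, weak((t₁,ς),(t₂,ς)), (t₁,ς) →λ (t₁',ς') and (t₂,ς) →λ (t₂',ς') then strong((t₁',ς'),(t₂',ς')); (A7,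 adequacy of the emulation invariant) if emulInv(s,α,i) and α(i) ∈ In then for every ς there is s' with (s,ς) ⇀^{α(i)} (s', upd(α(i),ς)) in the source; (A8, preservation of the emulation invariant) if emulInv(s,α,i) and (s,ς) ⇀^{α(i)} (s',ς') in the source then emulInv(s',α,i+1); strong is symmetric; weak is symmetric and transitive; and α is alternating: for every position j with j+1 < |α|, α(j) ∈ In implies α(j+1) ∉ In, and α(j) ∈ Out implies α(j+1) ∉ Out. Then TrICL is a step-wise alternating backward simulation: for every i < |α| with α(i) ∈ In ∪ Out, if TrICL(s,t,u,ς,α,i) holds and (u,ς) ⇀^{α(i)} (u',ς') in the target, then there exist s' and t' such that (s,ς) ⇀^{α(i)} (s',ς') in the source, (t,ς) ⇀^{α(i)} (t',ς') in the target, and TrICL(s',t',u',ς',α,i+1). -/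
/-- A shared-state labeled transition system over labels `L` and shared
information `V`: a silent step relation (leaving the shared information
unchanged) and, for each label, a labeled step relation. -/
structure SLTS (S L V : Type*) where
  /-- silent step `(s,ς) →τ (s',ς)`; the shared information is unchanged -/
  tau : V → S → S → Prop
  /-- labeled step `(s,ς) →λ (s',ς')` -/
  step : L → S → V → S → V → Prop

/-- Compressed step `(s,ς) ⇀λ (s',ς')`: finitely many silent steps followed
by a single labeled step. -/
def SLTS.comp {S L V : Type*} (M : SLTS S L V)
    (lbl : L) (s : S) (ς : V) (s' : S) (ς' : V) : Prop :=
  ∃ s'', Relation.ReflTransGen (M.tau ς) s s'' ∧ M.step lbl s'' ς s' ς'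

/-- A run producing a trace `α` from `(s,ς)`, ending in `(s',ς')`:
a sequence of compressed steps, one for each label of `α`. -/
inductive SLTS.Run {S L V : Type*} (M : SLTS S L V) :
    S → V → List L → S → V → Prop
  | nil (s : S) (ς : V) : SLTS.Run M s ς [] s ς
  | cons {s s' s'' : S} {ς ς' ς'' : V} {lbl : L} {rest : List L} :
      M.comp lbl s ς s' ς' → SLTS.Run M s' ς' rest s'' ς'' →
      SLTS.Run M s ς (lbl :: rest) s'' ς''

/-- The TrICL relation, indexed by a trace `α` and a position `i`. -/
def TrICL {S T L V : Type*}
    (cross : S → T → Prop)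
    (emulInv : S → List L → ℕ → Prop)
    (strong weak : T → V → T → V → Prop)
    (In Out : Set L)
    (s : S) (t u : T) (ς : V) (α : List L) (i : ℕ) : Prop :=
  cross s t ∧ emulInv s α i ∧
  (∀ (h : i < α.length), α[i]'h ∈ Out → strong t ς u ς) ∧
  (∀ (h : i < α.length), α[i]'h ∈ In → weak t ς u ς)

/-- TrICL is a step-wise alternating backward simulation. -/
theorem stmt_4
    {S T L V : Type*}
    (src : SLTS S L V) (tgt : SLTS T L V)
    (In Out : Set L) (hdisj : Disjoint In Out)
    (upd : L → V → V)
    (hupdS : ∀ (lbl : L) (s : S) (ς : V) (s' : S) (ς' : V),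
      src.step lbl s ς s' ς' → ς' = upd lbl ς)
    (hupdT : ∀ (lbl : L) (t : T) (ς : V) (t' : T) (ς' : V),
      tgt.step lbl t ς t' ς' → ς' = upd lbl ς)
    (cross : S → T → Prop)
    (strong weak : T → V → T → V → Prop)
    (emulInv : S → List L → ℕ → Prop)
    -- A1: forward simulation
    (A1 : ∀ (s : S) (t : T) (lbl : L) (ς : V) (s' : S) (ς' : V),
      cross s t → src.comp lbl s ς s' ς' →
      ∃ t', tgt.comp lbl t ς t' ς' ∧ cross s' t')
    -- A2: backward simulation
    (A2 : ∀ (s : S) (t : T) (lbl : L) (ς : V) (t' : T) (ς' : V),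
      cross s t → tgt.comp lbl t ς t' ς' →
      ∃ s', src.comp lbl s ς s' ς' ∧ cross s' t')
    -- A3: lock-step simulation of strong similarity
    (A3 : ∀ (t₁ t₂ : T) (ς : V) (t₁' : T),
      strong t₁ ς t₂ ς → tgt.tau ς t₁ t₁' →
      ∃ t₂', tgt.tau ς t₂ t₂' ∧ strong t₁' ς t₂' ς)
    -- A4: weakening
    (A4 : ∀ (lbl : L) (t₁ t₂ : T) (ς : V) (t₁' : T) (ς' : V),
      lbl ∈ Out → strong t₁ ς t₂ ς → tgt.step lbl t₁ ς t₁' ς' →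
      ∃ t₂', tgt.step lbl t₂ ς t₂' ς' ∧ weak t₁' ς' t₂' ς')
    -- A5: option simulation of weak similarity
    (A5 : ∀ (t₁ t₂ : T) (ς : V) (t₁' : T),
      weak t₁ ς t₂ ς → tgt.tau ς t₁ t₁' → weak t₁' ς t₂ ς)
    -- A6: strengthening
    (A6 : ∀ (lbl : L) (t₁ t₂ : T) (ς : V) (t₁' t₂' : T) (ς' : V),
      lbl ∈ In → weak t₁ ς t₂ ς → tgt.step lbl t₁ ς t₁' ς' →
      tgt.step lbl t₂ ς t₂' ς' → strong t₁' ς' t₂' ς')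
    -- A7: adequacy of the emulation invariant
    (A7 : ∀ (s : S) (α : List L) (i : ℕ) (hi : i < α.length),
      emulInv s α i → α[i]'hi ∈ In →
      ∀ ς : V, ∃ s', src.comp (α[i]'hi) s ς s' (upd (α[i]'hi) ς))
    -- A8: preservation of the emulation invariant
    (A8 : ∀ (s : S) (α : List L) (i : ℕ) (hi : i < α.length) (ς : V)
        (s' : S) (ς' : V),
      emulInv s α i → src.comp (α[i]'hi) s ς s' ς' → emulInv s' α (i + 1))
    -- strong is symmetric
    (hstrongSymm : ∀ (t₁ : T) (ς₁ : V) (t₂ : T) (ς₂ : V),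
      strong t₁ ς₁ t₂ ς₂ → strong t₂ ς₂ t₁ ς₁)
    -- weak is symmetric
    (hweakSymm : ∀ (t₁ : T) (ς₁ : V) (t₂ : T) (ς₂ : V),
      weak t₁ ς₁ t₂ ς₂ → weak t₂ ς₂ t₁ ς₁)
    -- weak is transitive
    (hweakTrans : ∀ (t₁ : T) (ς₁ : V) (t₂ : T) (ς₂ : V) (t₃ : T) (ς₃ : V),
      weak t₁ ς₁ t₂ ς₂ → weak t₂ ς₂ t₃ ς₃ → weak t₁ ς₁ t₃ ς₃)
    (α : List L)
    -- α is alternating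
    (halt : ∀ (j : ℕ) (h : j + 1 < α.length),
      (α[j]'(Nat.lt_of_succ_lt h) ∈ In → α[j + 1]'h ∉ In) ∧
      (α[j]'(Nat.lt_of_succ_lt h) ∈ Out → α[j + 1]'h ∉ Out)) :
    ∀ (i : ℕ) (hi : i < α.length), α[i]'hi ∈ In ∪ Out →
      ∀ (s : S) (t u : T) (ς : V) (u' : T) (ς' : V),
        TrICL cross emulInv strong weak In Out s t u ς α i →
        tgt.comp (α[i]'hi) u ς u' ς' →
        ∃ (s' : S) (t' : T),
          src.comp (α[i]'hi) s ς s' ς' ∧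
          tgt.comp (α[i]'hi) t ς t' ς' ∧
          TrICL cross emulInv strong weak In Out s' t' u' ς' α (i + 1) := by
  intro i hi hmem s t u ς u' ς' hT hu
  obtain ⟨hcross, hinv, hOutS, hInW⟩ := hT
  have A3' : ∀ (t₁ t₂ : T) (ς : V) (t₁' : T), strong t₁ ς t₂ ς →
      Relation.ReflTransGen (tgt.tau ς) t₁ t₁' →
      ∃ t₂', Relation.ReflTransGen (tgt.tau ς) t₂ t₂' ∧ strong t₁' ς t₂' ς := by
    intro t₁ t₂ ς t₁' hst hrt
    induction hrt with
    | refl => exact ⟨t₂, .refl, hst⟩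
    | tail hbc hstep ih =>
      obtain ⟨t₂', hrt', hst'⟩ := ih
      obtain ⟨t₂'', htau, hst''⟩ := A3 _ _ _ _ hst' hstep
      exact ⟨t₂'', hrt'.tail htau, hst''⟩
  have A5' : ∀ (t₁ t₂ : T) (ς : V) (t₁' : T), weak t₁ ς t₂ ς →
      Relation.ReflTransGen (tgt.tau ς) t₁ t₁' → weak t₁' ς t₂ ς := by
    intro t₁ t₂ ς t₁' hw hrt
    induction hrt with
    | refl => exact hw
    | tail hbc hstep ih => exact A5 _ _ _ _ ih hstep
  obtain ⟨u'', hurt, hustep⟩ := hu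
  rcases hmem with hIn | hOut
  · -- input case
    obtain ⟨s₀, hscomp⟩ := A7 s α i hi hinv hIn ς
    have hςu : ς' = upd (α[i]'hi) ς := hupdT _ _ _ _ _ hustep
    subst hςu
    obtain ⟨t', htcomp, hcross'⟩ := A1 s t _ ς s₀ _ hcross hscomp
    obtain ⟨t'', htrt, htstep⟩ := htcomp
    refine ⟨s₀, t', hscomp, ⟨t'', htrt, htstep⟩, hcross',
      A8 _ _ _ hi _ _ _ hinv hscomp, ?_, ?_⟩
    · intro h _
      have hw : weak t ς u ς := hInW hi hIn
      have hw1 : weak t'' ς u ς := A5' _ _ _ _ hw htrt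
      have hw2 : weak u'' ς t'' ς := A5' _ _ _ _ (hweakSymm _ _ _ _ hw1) hurt
      exact hstrongSymm _ _ _ _ (A6 _ _ _ _ _ _ _ hIn hw2 hustep htstep)
    · intro h hin
      exact absurd hin ((halt i h).1 hIn)
  · -- output case
    have hst : strong t ς u ς := hOutS hi hOut
    obtain ⟨t₂, htrt, hst'⟩ := A3' u t ς u'' (hstrongSymm _ _ _ _ hst) hurt
    obtain ⟨t₂', htstep, hweak'⟩ := A4 _ _ _ _ _ _ hOut hst' hustep
    have htcomp : tgt.comp (α[i]'hi) t ς t₂' ς' := ⟨t₂, htrt, htstep⟩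
    obtain ⟨s', hscomp, hcross'⟩ := A2 s t _ ς t₂' ς' hcross htcomp
    refine ⟨s', t₂', hscomp, htcomp, hcross',
      A8 _ _ _ hi _ _ _ hinv hscomp, ?_, ?_⟩
    · intro h hout
      exact absurd hout ((halt i h).2 hOut)
    · intro h _
      exact hweakSymm _ _ _ _ hweak'
end

section
/- Assume: strong and weak are symmetric; strong satisfies lock-step simulation for silent steps: if strong((t₁,ς),(t₂,ς)) and (t₁,ς) →τ (t₁',ς) then there is t₂' with (t₂,ς) →τ (t₂',ς) and strong((t₁',ς),(t₂',ς)); and weakening holds for labeled output steps: if λ ∈ Out, strong((t₁,ς),(t₂,ς)) and (t₁,ς) →λ (t₁',ς') then there is t₂' with (t₂,ς) →λ (t₂',ς') and weak((t₁',ς'),(t₂',ς')). Then weakening holds across compressed steps: if λ ∈ Out, strong((t₁,ς),(t₂,ς)) and (t₂,ς) ⇀λ (t₂',ς'), then there exists t₁' with (t₁,ς) ⇀λ (t₁',ς') and weak((t₁',ς'),(t₂',ς')). -/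
/-- Weakening of strong similarity to weak similarity across compressed
output steps. -/
theorem stmt_6
    {S L V : Type*}
    (M : SLTS S L V) (Out : Set L)
    (strong weak : S → V → S → V → Prop)
    -- strong is symmetric
    (hstrongSymm : ∀ (t₁ : S) (ς₁ : V) (t₂ : S) (ς₂ : V),
      strong t₁ ς₁ t₂ ς₂ → strong t₂ ς₂ t₁ ς₁)
    -- weak is symmetric
    (hweakSymm : ∀ (t₁ : S) (ς₁ : V) (t₂ : S) (ς₂ : V),
      weak t₁ ς₁ t₂ ς₂ → weak t₂ ς₂ t₁ ς₁)
    -- lock-step simulation of strong similarity for silent steps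
    (hlock : ∀ (t₁ t₂ : S) (ς : V) (t₁' : S),
      strong t₁ ς t₂ ς → M.tau ς t₁ t₁' →
      ∃ t₂', M.tau ς t₂ t₂' ∧ strong t₁' ς t₂' ς)
    -- weakening for labeled output steps
    (hweaken : ∀ (lbl : L) (t₁ t₂ : S) (ς : V) (t₁' : S) (ς' : V),
      lbl ∈ Out → strong t₁ ς t₂ ς → M.step lbl t₁ ς t₁' ς' →
      ∃ t₂', M.step lbl t₂ ς t₂' ς' ∧ weak t₁' ς' t₂' ς') :
    ∀ (lbl : L) (t₁ t₂ : S) (ς : V) (t₂' : S) (ς' : V),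
      lbl ∈ Out → strong t₁ ς t₂ ς → M.comp lbl t₂ ς t₂' ς' →
      ∃ t₁', M.comp lbl t₁ ς t₁' ς' ∧ weak t₁' ς' t₂' ς' := by
  intro lbl t₁ t₂ ς t₂' ς' hout hst hcomp
  obtain ⟨t₂'', htau, hstep⟩ := hcomp
  -- match tau steps: find t₁'' with t₁ →τ* t₁'' and strong t₂'' ς t₁'' ς
  have key : ∀ a b, Relation.ReflTransGen (M.tau ς) a b →
      ∀ c, strong a ς c ς →
      ∃ c', Relation.ReflTransGen (M.tau ς) c c' ∧ strong b ς c' ς := by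
    intro a b h
    induction h with
    | refl => exact fun c hc => ⟨c, .refl, hc⟩
    | tail _ hstep ih =>
      intro c hc
      obtain ⟨c', hrt, hs⟩ := ih c hc
      obtain ⟨c'', h1, h2⟩ := hlock _ _ _ _ hs hstep
      exact ⟨c'', hrt.tail h1, h2⟩
  obtain ⟨t₁'', hrt, hs⟩ := key t₂ t₂'' htau t₁ (hstrongSymm _ _ _ _ hst)
  obtain ⟨t₁', hstep', hw⟩ := hweaken lbl t₂'' t₁'' ς t₂' ς' hout hs hstep
  exact ⟨t₁', ⟨t₁'', hrt, hstep'⟩, hweakSymm _ _ _ _ hw⟩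
end

section
/- Let a compilation setting with trace semantics be given. Assume: (soundness of target trace equivalence) for all source partial programs p₁, p₂, if ↓p₁ and ↓p₂ are not contextually equivalent in the target language then they are not trace equivalent in the target language; (no trace is omitted or added by compilation) for every source partial program p and every trace α, α ∈ Trₛ(p) if and only if α ∈ Trₜ(↓p); and (completeness of source trace equivalence) for all p₁, p₂, if p₁ and p₂ are not trace equivalent in the source language then they are not contextually equivalent in the source language. Then the compiler preserves contextual equivalence: for all source partial programs p₁, p₂, if p₁ ≃ctx p₂ in the source language then ↓p₁ ≃ctx ↓p₂ in the target language. -/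
theorem stmt_10
    {PS PT CS CT WS WT L : Type*}
    (plugS : CS → PS → WS) (plugT : CT → PT → WT)
    (convS : WS → Prop) (convT : WT → Prop)
    (compile : PS → PT)
    (TrS : PS → Set (List L)) (TrT : PT → Set (List L))
    -- soundness of target trace equivalence
    (hsound : ∀ p₁ p₂ : PS,
      ¬ (∀ C : CT, convT (plugT C (compile p₁)) ↔ convT (plugT C (compile p₂))) →
      TrT (compile p₁) ≠ TrT (compile p₂))
    -- no trace is omitted or added by compilation
    (htr : ∀ (p : PS) (α : List L), α ∈ TrS p ↔ α ∈ TrT (compile p))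
    -- completeness of source trace equivalence
    (hcompl : ∀ p₁ p₂ : PS,
      TrS p₁ ≠ TrS p₂ →
      ¬ (∀ C : CS, convS (plugS C p₁) ↔ convS (plugS C p₂))) :
    ∀ p₁ p₂ : PS,
      (∀ C : CS, convS (plugS C p₁) ↔ convS (plugS C p₂)) →
      (∀ C : CT, convT (plugT C (compile p₁)) ↔ convT (plugT C (compile p₂))) := by
  intro p₁ p₂ hctx
  by_contra h
  apply hcompl p₁ p₂ _ hctx
  intro hTrS
  apply hsound p₁ p₂ h
  ext α
  rw [← htr, ← htr, hTrS]
end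

section
/- Let a compilation setting with trace semantics be given, together with a compiler ↓c mapping source contexts to target contexts. Assume: (whole-program correctness) for every source context C and source partial program p, C[p]⇓ in the source language iff (↓c C)[↓p]⇓ in the target language; (soundness of target trace equivalence) for all p₁, p₂, if ↓p₁ and ↓p₂ are not contextually equivalent in the target language then they are not trace equivalent in the target language; (no trace is omitted or added by compilation) for every p and every trace α, α ∈ Trₛ(p) iff α ∈ Trₜ(↓p); and (completeness of source trace equivalence) for all p₁, p₂, if p₁ and p₂ are not trace equivalent in the source language then they are not contextually equivalent in the source language. Then the compiler is fully abstract: for all source partial programs p₁, p₂, p₁ ≃ctx p₂ in the source language if and only if ↓p₁ ≃ctx ↓p₂ in the target language. -/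
/-- Full abstraction of the compiler from whole-program correctness,
soundness of target trace equivalence, trace preservation/reflection of
compilation, and completeness of source trace equivalence. -/
theorem stmt_12
    {PS PT CS CT WS WT L : Type*}
    (plugS : CS → PS → WS) (plugT : CT → PT → WT)
    (convS : WS → Prop) (convT : WT → Prop)
    (compile : PS → PT) (compileC : CS → CT)
    (TrS : PS → Set (List L)) (TrT : PT → Set (List L))
    -- whole-program correctness
    (hcorrect : ∀ (C : CS) (p : PS),
      convS (plugS C p) ↔ convT (plugT (compileC C) (compile p)))
    -- soundness of target trace equivalence
    (hsound : ∀ p₁ p₂ : PS,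
      ¬ (∀ C : CT, convT (plugT C (compile p₁)) ↔ convT (plugT C (compile p₂))) →
      TrT (compile p₁) ≠ TrT (compile p₂))
    -- no trace is omitted or added by compilation
    (htr : ∀ (p : PS) (α : List L), α ∈ TrS p ↔ α ∈ TrT (compile p))
    -- completeness of source trace equivalence
    (hcompl : ∀ p₁ p₂ : PS,
      TrS p₁ ≠ TrS p₂ →
      ¬ (∀ C : CS, convS (plugS C p₁) ↔ convS (plugS C p₂))) :
    ∀ p₁ p₂ : PS,
      (∀ C : CS, convS (plugS C p₁) ↔ convS (plugS C p₂)) ↔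
      (∀ C : CT, convT (plugT C (compile p₁)) ↔ convT (plugT C (compile p₂))) := by
  intro p₁ p₂
  constructor
  · intro hS
    by_contra hT
    apply hcompl p₁ p₂ _ hS
    have hne := hsound p₁ p₂ hT
    intro h
    apply hne
    ext α
    rw [← htr, ← htr, h]
  · intro hT C
    rw [hcorrect, hcorrect]
    exact hT (compileC C)
end
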